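/- In a finite discounted MDP, let π and π' be stationary policies and s₀ ∈ S a start state. If Σ_{s∈S} d^π_{s₀}(s) Σ_{a∈A} π(a|s) A^{π'}(s,a) > 0, then V^π(s₀) > V^{π'}(s₀); that is, strictly positive occupancy-weighted advantage of π over π' implies strict improvement of π over π' from s₀. -/

import Mathlib

/-- The Bellman operator of a stationary policy `π` in a finite discounted MDP. -/
def Tpol {S A : Type*} [Fintype S] [Fintype A]
    (P : S → A → S → ℝ) (r : S → A → ℝ) (γ : ℝ) (π : S → A → ℝ)
    (V : S → ℝ) : S → ℝ :=
  fun s => ∑ a, π s a * (r s a + γ * ∑ s', P s a s' * V s')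

/-- State distribution after `t` steps of policy `π` started from `s₀`. -/
def muSeq {S A : Type*} [Fintype S] [Fintype A] [DecidableEq S]
    (P : S → A → S → ℝ) (π : S → A → ℝ) (s₀ : S) : ℕ → S → ℝ
  | 0 => fun s => if s = s₀ then 1 else 0
  | t + 1 => fun s' => ∑ s, ∑ a, muSeq P π s₀ t s * π s a * P s a s'

/-- The discounted occupancy measure `d^π_{s₀}(s) = (1−γ) Σ_{t≥0} γ^t μ^π_t(s)`. -/
noncomputable def occ {S A : Type*} [Fintype S] [Fintype A] [DecidableEq S]
    (P : S → A → S → ℝ) (π : S → A → ℝ) (γ : ℝ) (s₀ : S) : S → ℝ :=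
  fun s => (1 - γ) * ∑' t : ℕ, γ ^ t * muSeq P π s₀ t s

/-- strictly positive occupancy-weighted advantage of `π` over `π'`
implies strict improvement of `π` over `π'` from `s₀`. -/
theorem stmt10 {S A : Type*} [Fintype S] [Fintype A] [Nonempty S] [Nonempty A]
    [DecidableEq S]
    (P : S → A → S → ℝ) (hP0 : ∀ s a s', 0 ≤ P s a s')
    (hP1 : ∀ s a, ∑ s', P s a s' = 1)
    (r : S → A → ℝ) (γ : ℝ) (hγ0 : 0 ≤ γ) (hγ1 : γ < 1)
    (π : S → A → ℝ) (hπ0 : ∀ s a, 0 ≤ π s a) (hπ1 : ∀ s, ∑ a, π s a = 1)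
    (π' : S → A → ℝ) (hπ'0 : ∀ s a, 0 ≤ π' s a) (hπ'1 : ∀ s, ∑ a, π' s a = 1)
    (Vpi : S → ℝ) (hVpi : Tpol P r γ π Vpi = Vpi)
    (Vpi' : S → ℝ) (hVpi' : Tpol P r γ π' Vpi' = Vpi')
    (s₀ : S)
    (hpos : 0 < ∑ s, occ P π γ s₀ s *
        ∑ a, π s a * ((r s a + γ * ∑ t, P s a t * Vpi' t) - Vpi' s)) :
    Vpi' s₀ < Vpi s₀ := by
  set Δ : S → ℝ := fun s => ∑ a, π s a * ((r s a + γ * ∑ t, P s a t * Vpi' t) - Vpi' s) with hΔ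
  set μ : ℕ → S → ℝ := muSeq P π s₀ with hμ
  have hstep : ∀ (t : ℕ) (f : S → ℝ),
      ∑ s', μ (t+1) s' * f s'
        = ∑ s, μ t s * ∑ a, π s a * ∑ s', P s a s' * f s' := by
    intro t f
    simp only [hμ, muSeq, Finset.sum_mul, Finset.mul_sum]
    rw [Finset.sum_comm]
    refine Finset.sum_congr rfl fun s _ => ?_
    rw [Finset.sum_comm]
    exact Finset.sum_congr rfl fun a _ => Finset.sum_congr rfl fun s' _ => by ring
  have hμ0 : ∀ t s, 0 ≤ μ t s := by
    intro t
    induction t with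
    | zero => intro s; simp only [hμ, muSeq]; positivity
    | succ t ih =>
      intro s'
      simp only [hμ, muSeq]
      exact Finset.sum_nonneg fun s _ => Finset.sum_nonneg fun a _ =>
        mul_nonneg (mul_nonneg (ih s) (hπ0 s a)) (hP0 s a s')
  have hμ1 : ∀ t, ∑ s, μ t s = 1 := by
    intro t
    induction t with
    | zero => simp [hμ, muSeq]
    | succ t ih =>
      have := hstep t (fun _ => 1)
      simpa [hP1, hπ1, ih] using this
  have hμle : ∀ t s, μ t s ≤ 1 := by
    intro t s
    calc μ t s ≤ ∑ s, μ t s := Finset.single_le_sum (fun s _ => hμ0 t s) (Finset.mem_univ s)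
    _ = 1 := hμ1 t
  have hbound : ∀ (t : ℕ) (h : S → ℝ), |∑ s, μ t s * h s| ≤ ∑ s, |h s| := by
    intro t h
    calc |∑ s, μ t s * h s| ≤ ∑ s, |μ t s * h s| := Finset.abs_sum_le_sum_abs _ _
      _ ≤ ∑ s, |h s| := Finset.sum_le_sum fun s _ => by
          rw [abs_mul, abs_of_nonneg (hμ0 t s)]
          nlinarith [abs_nonneg (h s), hμle t s, hμ0 t s]
  set g : S → ℝ := fun s => Vpi s - Vpi' s with hgdef
  have hg : ∀ s, g s = Δ s + γ * ∑ a, π s a * ∑ s', P s a s' * g s' := by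
    intro s
    have hb := congrFun hVpi s
    simp only [Tpol] at hb
    have hΔs : Δ s = (∑ a, π s a * (r s a + γ * ∑ s', P s a s' * Vpi' s')) - Vpi' s := by
      simp only [hΔ, mul_sub, Finset.sum_sub_distrib, ← Finset.sum_mul, hπ1, one_mul]
    simp only [hgdef, hΔs, ← hb, mul_sub, mul_add, Finset.mul_sum,
      Finset.sum_sub_distrib, Finset.sum_add_distrib]
    have hco : ∀ V : S → ℝ, (∑ x : A, ∑ y : S, π s x * (γ * (P s x y * V y)))
        = ∑ x : A, ∑ y : S, γ * (π s x * (P s x y * V y)) :=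
      fun V => Finset.sum_congr rfl fun a _ => Finset.sum_congr rfl fun s' _ => by ring
    rw [hco Vpi, hco Vpi']
    ring
  set W : ℕ → ℝ := fun t => ∑ s, μ t s * g s with hW
  set D : ℕ → ℝ := fun t => ∑ s, μ t s * Δ s with hD
  have hrec : ∀ t, W t = D t + γ * W (t+1) := by
    intro t
    have h1 : W (t+1) = ∑ s, μ t s * ∑ a, π s a * ∑ s', P s a s' * g s' := hstep t g
    have h2 : W t = ∑ s, μ t s * (Δ s + γ * ∑ a, π s a * ∑ s', P s a s' * g s') :=
      Finset.sum_congr rfl fun s _ => by rw [← hg s]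
    have h3 : D t = ∑ s, μ t s * Δ s := rfl
    rw [h2, h1, h3, Finset.mul_sum, ← Finset.sum_add_distrib]
    exact Finset.sum_congr rfl fun s _ => by ring
  have htel : ∀ N, W 0 = (∑ t ∈ Finset.range N, γ ^ t * D t) + γ ^ N * W N := by
    intro N
    induction N with
    | zero => simp
    | succ N ih =>
      rw [ih, Finset.sum_range_succ, hrec N]
      ring
  have hgeo : Summable (fun t : ℕ => γ ^ t) := summable_geometric_of_lt_one hγ0 hγ1
  have htend0 : Filter.Tendsto (fun N => γ ^ N * W N) Filter.atTop (nhds 0) := by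
    have h1 : Filter.Tendsto (fun N : ℕ => (∑ s, |g s|) * γ ^ N) Filter.atTop (nhds 0) := by
      simpa using (tendsto_pow_atTop_nhds_zero_of_lt_one hγ0 hγ1).const_mul (∑ s, |g s|)
    apply squeeze_zero_norm _ h1
    intro N
    rw [Real.norm_eq_abs, abs_mul, abs_of_nonneg (pow_nonneg hγ0 N)]
    calc γ ^ N * |W N| ≤ γ ^ N * ∑ s, |g s| :=
          mul_le_mul_of_nonneg_left (hbound N g) (pow_nonneg hγ0 N)
      _ = (∑ s, |g s|) * γ ^ N := by ring
  have hhs : HasSum (fun t => γ ^ t * D t) (W 0) := by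
    rw [hasSum_iff_tendsto_nat_of_summable_norm]
    · have he : (fun N => ∑ t ∈ Finset.range N, γ ^ t * D t)
          = fun N => W 0 - γ ^ N * W N := by
        funext N; rw [htel N]; ring
      rw [he]
      simpa using (tendsto_const_nhds.sub htend0)
    · apply Summable.of_nonneg_of_le (fun t => norm_nonneg _)
        (fun t => ?_) (hgeo.mul_left (∑ s, |Δ s|))
      rw [Real.norm_eq_abs, abs_mul, abs_of_nonneg (pow_nonneg hγ0 t)]
      calc γ ^ t * |D t| ≤ γ ^ t * ∑ s, |Δ s| :=
            mul_le_mul_of_nonneg_left (hbound t Δ) (pow_nonneg hγ0 t)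
        _ = (∑ s, |Δ s|) * γ ^ t := by ring
  have hsummS : ∀ s, Summable (fun t : ℕ => γ ^ t * μ t s * Δ s) := by
    intro s
    apply Summable.of_norm_bounded (hgeo.mul_left |Δ s|)
    intro t
    rw [Real.norm_eq_abs, abs_mul, abs_mul, abs_of_nonneg (pow_nonneg hγ0 t),
      abs_of_nonneg (hμ0 t s)]
    calc γ ^ t * μ t s * |Δ s| ≤ γ ^ t * 1 * |Δ s| :=
          mul_le_mul_of_nonneg_right
            (mul_le_mul_of_nonneg_left (hμle t s) (pow_nonneg hγ0 t)) (abs_nonneg _)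
      _ = |Δ s| * γ ^ t := by ring
  have hocc : ∑ s, occ P π γ s₀ s * Δ s = (1 - γ) * W 0 := by
    have h1 : ∀ s, occ P π γ s₀ s * Δ s = (1 - γ) * ∑' t : ℕ, γ ^ t * μ t s * Δ s := by
      intro s
      simp only [occ, hμ]
      rw [mul_assoc, ← tsum_mul_right]
    rw [Finset.sum_congr rfl fun s _ => h1 s, ← Finset.mul_sum]
    congr 1
    rw [← Summable.tsum_finsetSum (fun s _ => hsummS s)]
    rw [← hhs.tsum_eq]
    apply tsum_congr
    intro t
    rw [hD, Finset.mul_sum]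
    exact Finset.sum_congr rfl fun s _ => by ring
  have hW0 : W 0 = g s₀ := by
    simp [hW, hμ, muSeq, ite_mul]
  have hpos' : 0 < (1 - γ) * W 0 := by
    rw [← hocc]
    exact hpos
  have h1γ : 0 < 1 - γ := by linarith
  have hWpos : 0 < W 0 := by
    by_contra h
    push_neg at h
    nlinarith
  rw [hW0] at hWpos
  simp only [hgdef] at hWpos
  linarith
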